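/- Let V be an n-dimensional complex vector space, φ a nilpotent endomorphism of V, and let {w_1,...,w_n} be a basis of V such that φ(w_x) − w_{x+1} ∈ span{w_j : j > x+1} for x < n and φ(w_n) = 0. Then for every d with 0 ≤ d ≤ n, setting F_d = span{w_1,...,w_d}, we have dim φ^{n−d}(F_d) = d. -/

import Mathlib

/-- dimension of the image of the partial flag under powers of φ. -/
theorem stmt_1 (n : ℕ) {V : Type*} [AddCommGroup V] [Module ℂ V]
    (φ : V →ₗ[ℂ] V) (hnil : IsNilpotent φ) (w : Module.Basis (Fin n) ℂ V)
    (h1 : ∀ x : Fin n, (hx : x.1 + 1 < n) →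
      φ (w x) - w ⟨x.1 + 1, hx⟩ ∈
        Submodule.span ℂ {v : V | ∃ j : Fin n, x.1 + 1 < j.1 ∧ v = w j})
    (h2 : ∀ x : Fin n, x.1 + 1 = n → φ (w x) = 0) :
    ∀ d : ℕ, d ≤ n →
      Module.finrank ℂ
        (Submodule.map (φ ^ (n - d))
          (Submodule.span ℂ {v : V | ∃ j : Fin n, j.1 < d ∧ v = w j})) = d := by
  -- T m : span of basis vectors with index ≥ m
  set T : ℕ → Submodule ℂ V :=
    fun m => Submodule.span ℂ {v : V | ∃ j : Fin n, m ≤ j.1 ∧ v = w j} with hT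
  have hTmono : ∀ m m' : ℕ, m ≤ m' → T m' ≤ T m := by
    intro m m' h
    apply Submodule.span_mono
    rintro v ⟨j, hj, rfl⟩
    exact ⟨j, h.trans hj, rfl⟩
  -- φ maps T m into T (m+1)
  have hφT : ∀ m : ℕ, ∀ v ∈ T m, φ v ∈ T (m + 1) := by
    intro m
    have : Submodule.map φ (T m) ≤ T (m + 1) := by
      rw [hT, Submodule.map_span, Submodule.span_le]
      rintro _ ⟨v, ⟨j, hj, rfl⟩, rfl⟩
      by_cases hx : j.1 + 1 < n
      · have hmem1 : φ (w j) - w ⟨j.1 + 1, hx⟩ ∈ T (m + 1) := by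
          refine Submodule.span_le.mpr ?_ (h1 j hx)
          rintro v ⟨j', hj', rfl⟩
          exact Submodule.subset_span ⟨j', by omega, rfl⟩
        have hmem2 : w ⟨j.1 + 1, hx⟩ ∈ T (m + 1) :=
          Submodule.subset_span ⟨⟨j.1 + 1, hx⟩, by simp; omega, rfl⟩
        have := Submodule.add_mem _ hmem1 hmem2
        simpa [hT] using this
      · have hx' : j.1 + 1 = n := by omega
        rw [h2 j hx']
        exact Submodule.zero_mem _
    intro v hv
    exact this ⟨v, hv, rfl⟩
  -- key triangularity lemma for powers
  have key : ∀ m : ℕ, ∀ x : Fin n, ∀ h : x.1 + m < n,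
      (φ ^ m) (w x) - w ⟨x.1 + m, h⟩ ∈ T (x.1 + m + 1) := by
    intro m
    induction m with
    | zero =>
      intro x h
      have : w (⟨x.1 + 0, h⟩ : Fin n) = w x := by congr 1
      rw [pow_zero, Module.End.one_apply, this, sub_self]
      exact Submodule.zero_mem _
    | succ m ih =>
      intro x h
      have hm : x.1 + m < n := by omega
      have ihx := ih x hm
      have e1 : (φ ^ (m + 1)) (w x) = φ ((φ ^ m) (w x)) := by
        rw [pow_succ']; rfl
      have hmem1 : φ ((φ ^ m) (w x) - w ⟨x.1 + m, hm⟩) ∈ T (x.1 + m + 2) :=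
        hφT _ _ ihx
      have hx1 : (⟨x.1 + m, hm⟩ : Fin n).1 + 1 < n := by dsimp only; omega
      have hmem2 : φ (w ⟨x.1 + m, hm⟩) - w ⟨x.1 + m + 1, hx1⟩ ∈ T (x.1 + m + 2) := by
        refine Submodule.span_le.mpr ?_ (h1 ⟨x.1 + m, hm⟩ hx1)
        rintro v ⟨j', hj', rfl⟩
        exact Submodule.subset_span ⟨j', by simp at hj' ⊢; omega, rfl⟩
      have hsum := Submodule.add_mem _ hmem1 hmem2
      have heq : φ ((φ ^ m) (w x) - w ⟨x.1 + m, hm⟩) +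
          (φ (w ⟨x.1 + m, hm⟩) - w ⟨x.1 + m + 1, hx1⟩) =
          (φ ^ (m + 1)) (w x) - w ⟨x.1 + (m + 1), h⟩ := by
        rw [map_sub, e1]
        have : w (⟨x.1 + (m + 1), h⟩ : Fin n) = w ⟨x.1 + m + 1, hx1⟩ := by
          congr 1
        rw [this]
        abel
      rw [heq] at hsum
      have : x.1 + m + 2 = x.1 + (m + 1) + 1 := by omega
      rw [this] at hsum
      exact hsum
  intro d hd
  set k := n - d with hk
  set M := Submodule.map (φ ^ k)
    (Submodule.span ℂ {v : V | ∃ j : Fin n, j.1 < d ∧ v = w j}) with hM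
  -- M = T k
  have hMle : M ≤ T k := by
    rw [hM, Submodule.map_span, Submodule.span_le]
    rintro _ ⟨v, ⟨j, hj, rfl⟩, rfl⟩
    have hjk : j.1 + k < n := by omega
    have hm := key k j hjk
    have hw : w ⟨j.1 + k, hjk⟩ ∈ T k :=
      Submodule.subset_span ⟨⟨j.1 + k, hjk⟩, by simp, rfl⟩
    have := Submodule.add_mem _ (hTmono k (j.1 + k + 1) (by omega) hm) hw
    simpa using this
  have hwM : ∀ t : ℕ, ∀ i : Fin n, n - i.1 ≤ t → k ≤ i.1 → w i ∈ M := by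
    intro t
    induction t with
    | zero => intro i h1t _; exact absurd h1t (by omega)
    | succ t ih =>
      intro i h1t h2t
      have hjd : i.1 - k < d := by omega
      have hjk : (i.1 - k) + k < n := by omega
      have hkey := key k ⟨i.1 - k, by omega⟩ hjk
      have hu : (φ ^ k) (w ⟨i.1 - k, by omega⟩) ∈ M :=
        Submodule.mem_map_of_mem (Submodule.subset_span ⟨⟨i.1 - k, by omega⟩, hjd, rfl⟩)
      have hTle : T ((i.1 - k) + k + 1) ≤ M := by
        rw [hT, Submodule.span_le]
        rintro v ⟨l, hl, rfl⟩
        exact ih l (by omega) (by omega)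
      have hfin : w (⟨(i.1 - k) + k, hjk⟩ : Fin n) = w i := by
        congr 1; exact Fin.ext (by simp; omega)
      have := Submodule.sub_mem _ hu (hTle hkey)
      rw [hfin] at this
      simpa using this
  have hTleM : T k ≤ M := by
    rw [hT, Submodule.span_le]
    rintro v ⟨j, hj, rfl⟩
    exact hwM n j (by omega) hj
  have hMT : M = T k := le_antisymm hMle hTleM
  rw [hMT]
  -- compute finrank of T k
  have hfinj : Function.Injective (fun i : Fin d => (⟨i.1 + k, by omega⟩ : Fin n)) := by
    intro a b hab
    have := congrArg Fin.val hab
    simp at this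
    exact Fin.ext this
  have hset : {v : V | ∃ j : Fin n, k ≤ j.1 ∧ v = w j} =
      Set.range (w ∘ fun i : Fin d => (⟨i.1 + k, by omega⟩ : Fin n)) := by
    ext v
    constructor
    · rintro ⟨j, hj, rfl⟩
      refine ⟨⟨j.1 - k, by omega⟩, ?_⟩
      simp only [Function.comp_apply]
      congr 1
      exact Fin.ext (by simp; omega)
    · rintro ⟨i, rfl⟩
      exact ⟨⟨i.1 + k, by omega⟩, by simp, rfl⟩
  rw [hT]
  simp only []
  show Module.finrank ℂ (Submodule.span ℂ {v : V | ∃ j : Fin n, k ≤ j.1 ∧ v = w j}) = d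
  rw [hset]
  have hli : LinearIndependent ℂ (w ∘ fun i : Fin d => (⟨i.1 + k, by omega⟩ : Fin n)) :=
    w.linearIndependent.comp _ hfinj
  rw [finrank_span_eq_card hli, Fintype.card_fin]
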